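/- Let D be a self-adjoint nonnegative operator on a finite-dimensional real inner product space, δ > 0, α > 0, and let w : [0,1] → V be differentiable and satisfy (tD + δI) w'(t) + α D w(t) = 0 for all t ∈ (0,1]. Then ‖w(t)‖ ≤ ‖w(0)‖ for all t ∈ [0,1]. -/

import Mathlib

open Real

theorem pseudoparabolic_nonexpansive {V : Type*} [NormedAddCommGroup V]
    [InnerProductSpace ℝ V] [FiniteDimensional ℝ V]
    (D : V →ₗ[ℝ] V) (hDsym : ∀ u v : V, (inner ℝ (D u) v : ℝ) = inner ℝ u (D v))
    (hDpos : ∀ u : V, 0 ≤ (inner ℝ (D u) u : ℝ))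
    (δ α : ℝ) (hδ : 0 < δ) (hα : 0 < α)
    (w w' : ℝ → V) (hderiv : ∀ t ∈ Set.Icc (0 : ℝ) 1, HasDerivAt w (w' t) t)
    (heq : ∀ t ∈ Set.Ioc (0 : ℝ) 1,
      t • D (w' t) + δ • w' t + α • D (w t) = 0) :
    ∀ t ∈ Set.Icc (0 : ℝ) 1, ‖w t‖ ≤ ‖w 0‖ := by
  -- key sign fact
  have key : ∀ s ∈ Set.Ioc (0 : ℝ) 1, (inner ℝ (w' s) (w s) : ℝ) ≤ 0 := by
    intro s hs
    set A : V →ₗ[ℝ] V := s • D + δ • LinearMap.id with hA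
    have hAapp : ∀ v, A v = s • D v + δ • v := by
      intro v; simp [hA]
    have hAinj : Function.Injective A := by
      rw [← LinearMap.ker_eq_bot, LinearMap.ker_eq_bot']
      intro v hv
      have h1 : (inner ℝ (A v) v : ℝ) = 0 := by rw [hv]; simp
      rw [hAapp] at h1
      have h2 : s * (inner ℝ (D v) v : ℝ) + δ * (inner ℝ v v : ℝ) = 0 := by
        simpa [inner_add_left, real_inner_smul_left] using h1
      have h3 : (inner ℝ v v : ℝ) = 0 := by
        nlinarith [hDpos v, real_inner_self_nonneg (x := v), hs.1.le]
      exact inner_self_eq_zero.mp h3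
    obtain ⟨x, hx⟩ := (LinearMap.injective_iff_surjective.mp hAinj) (w s)
    have hcomm : A (D x) = D (A x) := by
      simp only [hAapp, map_add, map_smul]
    have hzero : A (w' s + α • D x) = A 0 := by
      rw [map_add, map_smul, hcomm, hx, map_zero, hAapp]
      have := heq s hs
      linear_combination (norm := module) this
    have hw' : w' s = -(α • D x) := by
      have := hAinj hzero
      have h0 : w' s + α • D x = 0 := this
      linear_combination (norm := module) h0
    have hws : w s = s • D x + δ • x := by rw [← hx, hAapp]
    rw [hw', hws]
    have e1 : (inner ℝ (-(α • D x)) (s • D x + δ • x) : ℝ)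
        = -(α * (s * (inner ℝ (D x) (D x) : ℝ) + δ * (inner ℝ (D x) x : ℝ))) := by
      simp [inner_add_right, real_inner_smul_left, real_inner_smul_right,
        inner_neg_left]
      ring
    rw [e1]
    have h4 : (0:ℝ) ≤ inner ℝ (D x) (D x) := real_inner_self_nonneg
    have h5 : (0:ℝ) ≤ inner ℝ (D x) x := by
      rw [real_inner_comm, ← hDsym]
      exact hDpos x
    have hnn : (0:ℝ) ≤ s * (inner ℝ (D x) (D x) : ℝ) + δ * (inner ℝ (D x) x : ℝ) :=
      add_nonneg (mul_nonneg hs.1.le h4) (mul_nonneg hδ.le h5)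
    nlinarith [mul_nonneg hα.le hnn]
  -- monotonicity of the squared norm
  set G : ℝ → ℝ := fun t => (inner ℝ (w t) (w t) : ℝ) with hG
  have hGderiv : ∀ t ∈ Set.Icc (0:ℝ) 1,
      HasDerivAt G ((inner ℝ (w t) (w' t) : ℝ) + inner ℝ (w' t) (w t)) t :=
    fun t ht => (hderiv t ht).inner ℝ (hderiv t ht)
  have hmono : AntitoneOn G (Set.Icc 0 1) := by
    apply antitoneOn_of_deriv_nonpos (convex_Icc 0 1)
    · exact fun t ht => ((hGderiv t ht).continuousAt).continuousWithinAt
    · intro t ht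
      rw [interior_Icc] at ht
      exact ((hGderiv t ⟨ht.1.le, ht.2.le⟩).differentiableAt).differentiableWithinAt
    · intro t ht
      rw [interior_Icc] at ht
      have := (hGderiv t ⟨ht.1.le, ht.2.le⟩).deriv
      rw [this]
      have hk := key t ⟨ht.1, ht.2.le⟩
      have : (inner ℝ (w t) (w' t) : ℝ) = inner ℝ (w' t) (w t) := real_inner_comm _ _
      linarith
  intro t ht
  have h01 : (0:ℝ) ∈ Set.Icc (0:ℝ) 1 := by constructor <;> norm_num
  have := hmono h01 ht ht.1
  have hGt : G t = ‖w t‖^2 := by rw [hG]; simp [real_inner_self_eq_norm_sq]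
  have hG0 : G 0 = ‖w 0‖^2 := by rw [hG]; simp [real_inner_self_eq_norm_sq]
  rw [hGt, hG0] at this
  nlinarith [norm_nonneg (w t), norm_nonneg (w 0)]
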